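/- Let T : Ω → Ω be the unique continuous map with T(⟨n⟩) = ⟨n+1⟩ for all n ∈ ℕ (such a map exists). Then Π_ρ(T(ω)) = Π_ρ(ω) + ρ in ℝ/ℤ for every ω ∈ Ω; that is, Π_ρ semiconjugates T to the rotation of the circle by angle ρ. -/

import Mathlib

/-- With the rotation-like data `a, p, q, r, S, ρ` as before,
`Ω ⊆ {0,1}^ℕ` with the product topology, `⟨n⟩ = angle n` the unique finitely supported
element of `Ω` with `Σ_j ⟨n⟩ j * S j = n`, `T : Ω → Ω` the (unique) continuous map with
`T ⟨n⟩ = ⟨n+1⟩`, and `Π_ρ : Ω → ℝ/ℤ` the continuous map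
`ω ↦ lim_N Σ_{j=0}^{N} ω j * S j * ρ (mod 1)`:
`Π_ρ (T ω) = Π_ρ ω + ρ` in `ℝ/ℤ` for every `ω ∈ Ω`, i.e. `Π_ρ` semiconjugates `T`
to the rotation of the circle by angle `ρ`. -/
theorem stmt_7 (a : ℕ → ℕ) (ha : ∀ k, 1 ≤ k → 1 ≤ a k)
    (q : ℕ → ℕ) (hq0 : q 0 = 1) (hq1 : q 1 = a 1)
    (hq : ∀ k, 1 ≤ k → q (k + 1) = a (k + 1) * q k + q (k - 1))
    (p : ℕ → ℕ) (hp0 : p 0 = 0) (hp1 : p 1 = 1)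
    (hp : ∀ k, 1 ≤ k → p (k + 1) = a (k + 1) * p k + p (k - 1))
    (ρ : ℝ) (hρirr : Irrational ρ) (hρmem : ρ ∈ Set.Ioo (0 : ℝ) 1)
    (hρlim : Filter.Tendsto (fun k => (p k : ℝ) / (q k : ℝ)) Filter.atTop (nhds ρ))
    (r : ℕ → ℕ) (hr1 : r 1 = q 1 - 1)
    (hr : ∀ k, 1 ≤ k → r (k + 1) = r k + a (k + 1))
    (S : ℕ → ℕ) (hSlow : ∀ j, j ≤ r 1 → S j = j + 1)
    (hShigh : ∀ k, 1 ≤ k → ∀ j, j < a (k + 1) → S (r k + j) = (j + 1) * q k)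
    (angle : ℕ → (ℕ → Bool))
    (hangle : ∀ n, {j | angle n j = true}.Finite ∧
      (∑ᶠ j, (angle n j).toNat * S j = n) ∧
      ∀ j, ∑ i ∈ Finset.range (j + 1), (angle n i).toNat * S i < S (j + 1))
    (T : {ω : ℕ → Bool // ∀ j, ∑ i ∈ Finset.range (j + 1), (ω i).toNat * S i < S (j + 1)}
       → {ω : ℕ → Bool // ∀ j, ∑ i ∈ Finset.range (j + 1), (ω i).toNat * S i < S (j + 1)})
    (hTcont : Continuous T)
    (hT : ∀ n : ℕ, (T ⟨angle n, (hangle n).2.2⟩).val = angle (n + 1))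
    (Pi : {ω : ℕ → Bool //
        ∀ j, ∑ i ∈ Finset.range (j + 1), (ω i).toNat * S i < S (j + 1)} → AddCircle (1 : ℝ))
    (hPicont : Continuous Pi)
    (hPi : ∀ ω, Filter.Tendsto
        (fun N => ((↑(∑ j ∈ Finset.range (N + 1),
            ((ω.val j).toNat : ℝ) * (S j : ℝ) * ρ)) : AddCircle (1 : ℝ)))
        Filter.atTop (nhds (Pi ω))) :
    ∀ ω, Pi (T ω) = Pi ω + ((ρ : ℝ) : AddCircle (1 : ℝ)) := by
  classical
  haveI : Fact ((0:ℝ) < 1) := ⟨one_pos⟩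
  -- positivity of q
  have hqpos : ∀ k, 1 ≤ q k := by
    intro k
    induction k with
    | zero => omega
    | succ m ih =>
      match m, ih with
      | 0, _ => rw [hq1]; exact ha 1 le_rfl
      | m+1, ih =>
        rw [hq (m+1) (by omega)]
        exact le_trans (by simpa using Nat.mul_le_mul (ha (m+2) (by omega)) ih)
          (Nat.le_add_right _ _)
  -- monotonicity of q
  have hqmono : ∀ k, q k ≤ q (k+1) := by
    intro k
    match k with
    | 0 => rw [hq0, hq1]; exact ha 1 le_rfl
    | m+1 =>
      rw [hq (m+1) (by omega)]
      calc q (m+1) = 1 * q (m+1) := (one_mul _).symm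
        _ ≤ a (m+2) * q (m+1) := Nat.mul_le_mul_right _ (ha (m+2) (by omega))
        _ ≤ _ := Nat.le_add_right _ _
  have hqMono : Monotone q := monotone_nat_of_le_succ hqmono
  -- growth of r
  have hrge : ∀ m, r 1 + m ≤ r (1 + m) := by
    intro m
    induction m with
    | zero => simp
    | succ m ih =>
      have h1 : r (1 + (m+1)) = r (1+m) + a (1+m+1) := hr (1+m) (by omega)
      have h2 := ha (1+m+1) (by omega)
      omega
  -- every index is covered
  have cover : ∀ j, j ≤ r 1 ∨ ∃ k i, 1 ≤ k ∧ i < a (k+1) ∧ j = r k + i := by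
    intro j
    by_cases hj : j ≤ r 1
    · exact Or.inl hj
    right
    push_neg at hj
    set P : ℕ → Prop := fun k => 1 ≤ k ∧ r k ≤ j with hPdef
    have hP1 : P 1 := ⟨le_rfl, le_of_lt hj⟩
    have hbd : ∀ k, P k → k ≤ j + 1 := by
      intro k hk
      have h1 := hrge (k - 1)
      have hk1 : 1 + (k-1) = k := by omega
      rw [hk1] at h1
      omega
    set K := Nat.findGreatest P (j+1) with hK
    have hPK : P K := Nat.findGreatest_spec (m := 1) (by omega) hP1
    have hKlt : j < r (K+1) := by
      by_contra hcon
      push_neg at hcon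
      have hPK1 : P (K+1) := ⟨by omega, hcon⟩
      exact Nat.findGreatest_is_greatest (Nat.lt_succ_self K) (hbd (K+1) hPK1) hPK1
    have hrK1 := hr K hPK.1
    exact ⟨K, j - r K, hPK.1, by omega, by omega⟩
  -- positivity of S
  have hSpos : ∀ j, 1 ≤ S j := by
    intro j
    rcases cover j with hj | ⟨k, i, hk, hi, rfl⟩
    · rw [hSlow j hj]; omega
    · rw [hShigh k hk i hi]
      calc 1 = 1 * 1 := rfl
        _ ≤ (i+1) * q k := Nat.mul_le_mul (by omega) (hqpos k)
  -- monotonicity of S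
  have hmono : ∀ j, S j ≤ S (j+1) := by
    intro j
    rcases cover j with hj | ⟨k, i, hk, hi, rfl⟩
    · by_cases hj' : j < r 1
      · rw [hSlow j hj, hSlow (j+1) (by omega)]; omega
      · have hjr : j = r 1 := by omega
        have hq1pos := hqpos 1
        have hSj : S j = q 1 := by rw [hSlow j hj]; omega
        rcases cover (j+1) with h' | ⟨k, i, hk, hi, he⟩
        · omega
        · rw [he, hShigh k hk i hi, hSj]
          calc q 1 ≤ q k := hqMono hk
            _ = 1 * q k := (one_mul _).symm
            _ ≤ (i+1) * q k := Nat.mul_le_mul_right _ (by omega)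
    · by_cases hi' : i + 1 < a (k+1)
      · have h1 : r k + i + 1 = r k + (i+1) := rfl
        rw [hShigh k hk i hi, h1, hShigh k hk (i+1) hi']
        exact Nat.mul_le_mul_right _ (by omega)
      · have hia : i + 1 = a (k+1) := by omega
        have h1 : r k + i + 1 = r (k+1) + 0 := by rw [hr k hk]; omega
        rw [hShigh k hk i hi, h1, hShigh (k+1) (by omega) 0 (ha (k+2) (by omega)),
          hq k hk, hia]
        simp
  have hSmono : Monotone S := monotone_nat_of_le_succ hmono
  -- uniqueness of representations, asymmetric key step
  have key : ∀ (d e : ℕ → Bool) (M J : ℕ), J < M →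
      (∀ i, J < i → d i = e i) →
      (∀ j, ∑ i ∈ Finset.range (j+1), (e i).toNat * S i < S (j+1)) →
      d J = true → e J = false →
      (∑ i ∈ Finset.range M, (d i).toNat * S i
        = ∑ i ∈ Finset.range M, (e i).toNat * S i) → False := by
    intro d e M J hJM hagree hconde hdJ heJ hsum
    have hsplit : ∀ f : ℕ → Bool, ∑ i ∈ Finset.range (J+1), (f i).toNat * S i
        + ∑ i ∈ Finset.Ico (J+1) M, (f i).toNat * S i
        = ∑ i ∈ Finset.range M, (f i).toNat * S i := fun f =>
      Finset.sum_range_add_sum_Ico _ (by omega)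
    have hIco : ∑ i ∈ Finset.Ico (J+1) M, (d i).toNat * S i
        = ∑ i ∈ Finset.Ico (J+1) M, (e i).toNat * S i := by
      refine Finset.sum_congr rfl (fun i hi => ?_)
      rw [Finset.mem_Ico] at hi
      rw [hagree i (by omega)]
    have h1 := hsplit d
    have h2 := hsplit e
    have hA : ∑ i ∈ Finset.range (J+1), (d i).toNat * S i
        = ∑ i ∈ Finset.range (J+1), (e i).toNat * S i := by omega
    have hd' : ∑ i ∈ Finset.range (J+1), (d i).toNat * S i
        = ∑ i ∈ Finset.range J, (d i).toNat * S i + S J := by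
      rw [Finset.sum_range_succ, hdJ]; simp
    have he' : ∑ i ∈ Finset.range (J+1), (e i).toNat * S i
        = ∑ i ∈ Finset.range J, (e i).toNat * S i := by
      rw [Finset.sum_range_succ, heJ]; simp
    have hlt : ∑ i ∈ Finset.range J, (e i).toNat * S i < S J := by
      match J with
      | 0 => simpa using Nat.lt_of_lt_of_le Nat.zero_lt_one (hSpos 0)
      | m+1 => exact hconde m
    omega
  -- uniqueness of representations
  have uniq : ∀ (d e : ℕ → Bool) (M : ℕ),
      (∀ i, M ≤ i → d i = false) → (∀ i, M ≤ i → e i = false) →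
      (∀ j, ∑ i ∈ Finset.range (j+1), (d i).toNat * S i < S (j+1)) →
      (∀ j, ∑ i ∈ Finset.range (j+1), (e i).toNat * S i < S (j+1)) →
      (∑ i ∈ Finset.range M, (d i).toNat * S i
        = ∑ i ∈ Finset.range M, (e i).toNat * S i) →
      d = e := by
    intro d e M hdM heM hcondd hconde hsum
    by_contra hne
    obtain ⟨i₀, hi₀⟩ := Function.ne_iff.1 hne
    set s := (Finset.range M).filter (fun i => d i ≠ e i) with hs
    have hi₀s : i₀ ∈ s := by
      rw [hs, Finset.mem_filter, Finset.mem_range]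
      refine ⟨?_, hi₀⟩
      by_contra h
      rw [hdM i₀ (by omega), heM i₀ (by omega)] at hi₀
      exact hi₀ rfl
    have hsne : s.Nonempty := ⟨i₀, hi₀s⟩
    set J := s.max' hsne with hJ
    have hJs : J ∈ s := s.max'_mem hsne
    rw [hs, Finset.mem_filter, Finset.mem_range] at hJs
    have hagree : ∀ i, J < i → d i = e i := by
      intro i hi
      by_cases hiM : i < M
      · by_contra h
        have his : i ∈ s := by rw [hs, Finset.mem_filter, Finset.mem_range]; exact ⟨hiM, h⟩
        have := s.le_max' i his
        omega
      · rw [hdM i (by omega), heM i (by omega)]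
    cases hdJ : d J <;> cases heJ : e J
    · rw [hdJ, heJ] at hJs; exact hJs.2 rfl
    · exact key e d M J hJs.1 (fun i hi => (hagree i hi).symm) hcondd heJ hdJ hsum.symm
    · exact key d e M J hJs.1 hagree hconde hdJ heJ hsum
    · rw [hdJ, heJ] at hJs; exact hJs.2 rfl
  -- a bound for the support of angle n
  have hbound : ∀ n, ∃ M, ∀ i, M ≤ i → angle n i = false := by
    intro n
    obtain ⟨M, hM⟩ := (hangle n).1.bddAbove
    refine ⟨M+1, fun i hi => ?_⟩
    by_contra hcon
    have hmem : i ∈ {j | angle n j = true} := by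
      simp only [Set.mem_setOf_eq]
      exact Bool.not_eq_false _ |>.mp hcon
    have := hM hmem
    omega
  -- finite sums past the support give n
  have hfin : ∀ n M, (∀ i, M ≤ i → angle n i = false) →
      ∑ i ∈ Finset.range M, (angle n i).toNat * S i = n := by
    intro n M hM
    have hsupp : Function.support (fun i => (angle n i).toNat * S i)
        ⊆ ↑(Finset.range M) := by
      intro i hi
      simp only [Function.mem_support] at hi
      simp only [Finset.coe_range, Set.mem_Iio]
      by_contra h
      rw [hM i (by omega)] at hi
      simp at hi
    rw [← finsum_eq_sum_of_support_subset _ hsupp]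
    exact (hangle n).2.1
  -- value of Pi at angle n
  have hcoeadd : ∀ x y : ℝ, ((x + y : ℝ) : AddCircle (1:ℝ))
      = (x : AddCircle (1:ℝ)) + (y : AddCircle (1:ℝ)) := fun x y => rfl
  have hPiangle : ∀ n : ℕ, Pi ⟨angle n, (hangle n).2.2⟩
      = (((n : ℝ) * ρ : ℝ) : AddCircle (1:ℝ)) := by
    intro n
    obtain ⟨M, hM⟩ := hbound n
    have hev : ∀ N, M ≤ N → (((∑ j ∈ Finset.range (N + 1),
        ((angle n j).toNat : ℝ) * (S j : ℝ) * ρ : ℝ)) : AddCircle (1:ℝ))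
        = (((n:ℝ) * ρ : ℝ) : AddCircle (1:ℝ)) := by
      intro N hN
      congr 1
      have h1 : ∑ j ∈ Finset.range (N+1), ((angle n j).toNat : ℝ) * (S j : ℝ) * ρ
          = ((∑ j ∈ Finset.range (N+1), (angle n j).toNat * S j : ℕ) : ℝ) * ρ := by
        push_cast
        rw [Finset.sum_mul]
      rw [h1, hfin n (N+1) (fun i hi => hM i (by omega))]
    have hconst : Filter.Tendsto (fun N => ((↑(∑ j ∈ Finset.range (N + 1),
        ((angle n j).toNat : ℝ) * (S j : ℝ) * ρ)) : AddCircle (1 : ℝ)))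
        Filter.atTop (nhds ((((n:ℝ) * ρ : ℝ)) : AddCircle (1:ℝ))) := by
      refine tendsto_const_nhds.congr' ?_
      filter_upwards [Filter.eventually_atTop.2 ⟨M, fun N hN => hN⟩] with N hN
      exact (hev N hN).symm
    exact tendsto_nhds_unique (hPi ⟨angle n, (hangle n).2.2⟩) hconst
  -- the semiconjugacy at the points angle n
  have hstep : ∀ n : ℕ, Pi (T ⟨angle n, (hangle n).2.2⟩)
      = Pi ⟨angle n, (hangle n).2.2⟩ + ((ρ:ℝ) : AddCircle (1:ℝ)) := by
    intro n
    have hTn : T ⟨angle n, (hangle n).2.2⟩ = ⟨angle (n+1), (hangle (n+1)).2.2⟩ :=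
      Subtype.ext (hT n)
    rw [hTn, hPiangle (n+1), hPiangle n, ← hcoeadd]
    congr 1
    push_cast
    ring
  -- main argument: approximate ω by truncations
  intro ω
  set τ : ℕ → ℕ → Bool := fun N i => if i ≤ N then ω.val i else false with hτdef
  set nN : ℕ → ℕ := fun N => ∑ i ∈ Finset.range (N+1), (ω.val i).toNat * S i with hnN
  have hτlow : ∀ N j, j ≤ N → ∑ i ∈ Finset.range (j+1), (τ N i).toNat * S i
      = ∑ i ∈ Finset.range (j+1), (ω.val i).toNat * S i := by
    intro N j hj
    refine Finset.sum_congr rfl (fun i hi => ?_)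
    rw [Finset.mem_range] at hi
    simp [hτdef, show i ≤ N by omega]
  have hτsumM : ∀ N M, N+1 ≤ M →
      ∑ i ∈ Finset.range M, (τ N i).toNat * S i = nN N := by
    intro N M hM
    have h2 : ∑ i ∈ Finset.range (N+1), (τ N i).toNat * S i
        = ∑ i ∈ Finset.range M, (τ N i).toNat * S i := by
      refine Finset.sum_subset (Finset.range_subset_range.2 hM) (fun i hi hni => ?_)
      rw [Finset.mem_range] at hni
      simp [hτdef, show ¬ i ≤ N by omega]
    rw [← h2, hτlow N N le_rfl]
  have hτmem : ∀ N, ∀ j, ∑ i ∈ Finset.range (j+1), (τ N i).toNat * S i < S (j+1) := by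
    intro N j
    by_cases hj : j ≤ N
    · rw [hτlow N j hj]
      exact ω.2 j
    · push_neg at hj
      rw [hτsumM N (j+1) (by omega)]
      exact lt_of_lt_of_le (ω.2 N) (hSmono (by omega : N+1 ≤ j+1))
  have hτeq : ∀ N, τ N = angle (nN N) := by
    intro N
    obtain ⟨M0, hM0⟩ := hbound (nN N)
    set M := max (N+1) M0 with hM
    refine uniq (τ N) (angle (nN N)) M ?_ ?_ (hτmem N) ((hangle (nN N)).2.2) ?_
    · intro i hi
      have : ¬ i ≤ N := by have := le_max_left (N+1) M0; omega
      simp [hτdef, this]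
    · intro i hi
      exact hM0 i (le_trans (le_max_right _ _) hi)
    · rw [hτsumM N M (le_max_left _ _),
        hfin (nN N) M (fun i hi => hM0 i (le_trans (le_max_right _ _) hi))]
  -- convergence of the truncations to ω
  have hτlim : Filter.Tendsto (fun N =>
      (⟨τ N, hτmem N⟩ : {ω : ℕ → Bool // ∀ j,
        ∑ i ∈ Finset.range (j + 1), (ω i).toNat * S i < S (j + 1)}))
      Filter.atTop (nhds ω) := by
    rw [tendsto_subtype_rng]
    rw [tendsto_pi_nhds]
    intro i
    refine tendsto_const_nhds.congr' ?_
    filter_upwards [Filter.eventually_atTop.2 ⟨i, fun N hN => hN⟩] with N hN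
    simp [hτdef, hN]
  have h1 : Filter.Tendsto (fun N => Pi (T ⟨τ N, hτmem N⟩)) Filter.atTop
      (nhds (Pi (T ω))) := ((hPicont.comp hTcont).tendsto ω).comp hτlim
  have h2 : Filter.Tendsto (fun N => Pi ⟨τ N, hτmem N⟩ + ((ρ:ℝ) : AddCircle (1:ℝ)))
      Filter.atTop (nhds (Pi ω + ((ρ:ℝ) : AddCircle (1:ℝ)))) :=
    ((hPicont.tendsto ω).comp hτlim).add tendsto_const_nhds
  have heq : ∀ N, Pi (T ⟨τ N, hτmem N⟩)
      = Pi ⟨τ N, hτmem N⟩ + ((ρ:ℝ) : AddCircle (1:ℝ)) := by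
    intro N
    have hsub : (⟨τ N, hτmem N⟩ : {ω : ℕ → Bool // ∀ j,
        ∑ i ∈ Finset.range (j + 1), (ω i).toNat * S i < S (j + 1)})
        = ⟨angle (nN N), (hangle (nN N)).2.2⟩ := Subtype.ext (hτeq N)
    rw [hsub]
    exact hstep (nN N)
  exact tendsto_nhds_unique (h1.congr heq) h2
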